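/- Let X be a separable LOTS, F the cdf of a probability Borel measure μ, F_- its left version, and G its pseudo-inverse with domain A ⊆ [0,1]. Then for a < b in X, the intersection of G^{-1}((a,b)) with A lies between the sets (F(a), F_-(b)) ∩ A and (F(a), F_-(b)] ∩ A; in particular (F(a), F_-(b)) ∩ A ⊆ G^{-1}((a,b)) ⊆ (F(a), F_-(b)] ∩ A. -/

import Mathlib

open MeasureTheory

theorem stmt18 {X : Type*} [LinearOrder X] [TopologicalSpace X] [OrderTopology X]
    [TopologicalSpace.SeparableSpace X] [MeasurableSpace X] [BorelSpace X]
    (μ : Measure X) [IsProbabilityMeasure μ]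
    (A : Set ℝ)
    (hA : A = {r ∈ Set.Icc (0 : ℝ) 1 |
      ∃ g : X, IsGLB {y : X | r ≤ (μ (Set.Iic y)).toReal} g})
    (G : ℝ → X)
    (hG : ∀ r ∈ A, IsGLB {y : X | r ≤ (μ (Set.Iic y)).toReal} (G r))
    (a b : X) (hab : a < b) :
    Set.Ioo ((μ (Set.Iic a)).toReal) ((μ (Set.Iio b)).toReal) ∩ A ⊆
        G ⁻¹' (Set.Ioo a b) ∩ A ∧
      G ⁻¹' (Set.Ioo a b) ∩ A ⊆
        Set.Ioc ((μ (Set.Iic a)).toReal) ((μ (Set.Iio b)).toReal) ∩ A := by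
  obtain ⟨D, hDc, hDd⟩ := TopologicalSpace.exists_countable_dense X
  have hA0 : ∀ r ∈ A, (0:ℝ) ≤ r := fun r hr => by rw [hA] at hr; exact hr.1.1
  have hmono : ∀ {s t : Set X}, s ⊆ t → (μ s).toReal ≤ (μ t).toReal :=
    fun hst => ENNReal.toReal_mono (measure_ne_top μ _) (measure_mono hst)
  -- key2 : from r < μ(Iio b) get a point y < b with r ≤ F y
  have key2 : ∀ r : ℝ, 0 ≤ r → r < (μ (Set.Iio b)).toReal →
      ∃ y, y < b ∧ r ≤ (μ (Set.Iic y)).toReal := by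
    intro r hr0 hr
    by_cases hp : ∃ p, p < b ∧ Set.Ioo p b = ∅
    · obtain ⟨p, hpb, hpe⟩ := hp
      refine ⟨p, hpb, ?_⟩
      have hIio : Set.Iio b = Set.Iic p := by
        ext x
        simp only [Set.mem_Iio, Set.mem_Iic]
        constructor
        · intro hx
          by_contra hxp
          push_neg at hxp
          exact absurd hpe (Set.nonempty_iff_ne_empty.1 ⟨x, hxp, hx⟩)
        · intro hx; exact lt_of_le_of_lt hx hpb
      rw [hIio] at hr
      exact hr.le
    · push_neg at hp
      set E : Set X := D ∩ Set.Iio b with hE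
      have hEc : E.Countable := hDc.mono Set.inter_subset_left
      have : Countable E := hEc.to_subtype
      have hcov : Set.Iio b = ⋃ d : E, Set.Iic (d : X) ∩ Set.Iio b := by
        ext x
        simp only [Set.mem_iUnion, Set.mem_inter_iff, Set.mem_Iio]
        constructor
        · intro hx
          have hne : (Set.Ioo x b).Nonempty := hp x hx
          obtain ⟨d, hdD, hdx⟩ := hDd.exists_mem_open isOpen_Ioo hne
          exact ⟨⟨d, hdD, hdx.2⟩, ⟨hdx.1.le, hx⟩⟩
        · rintro ⟨d, -, hx⟩; exact hx
      have hdir : Directed (· ⊆ ·) (fun d : E => Set.Iic (d : X) ∩ Set.Iio b) := by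
        intro i j
        rcases le_total (i : X) (j : X) with h | h
        · exact ⟨j, Set.inter_subset_inter_left _ (Set.Iic_subset_Iic.2 h), subset_rfl⟩
        · exact ⟨i, subset_rfl, Set.inter_subset_inter_left _ (Set.Iic_subset_Iic.2 h)⟩
      rw [hcov, Directed.measure_iUnion hdir] at hr
      by_contra hcon
      push_neg at hcon
      have hle : (⨆ d : E, μ (Set.Iic (d : X) ∩ Set.Iio b)) ≤ ENNReal.ofReal r := by
        refine iSup_le fun d => ?_
        have h1 : (μ (Set.Iic (d:X) ∩ Set.Iio b)).toReal ≤ (μ (Set.Iic (d:X))).toReal :=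
          hmono Set.inter_subset_left
        have h2 := hcon (d : X) d.2.2
        exact le_of_lt ((ENNReal.lt_ofReal_iff_toReal_lt (measure_ne_top μ _)).2
          (lt_of_le_of_lt h1 h2))
      have h3 := ENNReal.toReal_mono ENNReal.ofReal_ne_top hle
      rw [ENNReal.toReal_ofReal hr0] at h3
      exact absurd hr (not_lt.2 h3)
  -- key1 : F a < r together with r ≤ F b forces a < G r
  have key1 : ∀ r ∈ A, (μ (Set.Iic a)).toReal < r →
      r ≤ (μ (Set.Iic b)).toReal → a < G r := by
    intro r hrA hra hrb
    by_contra hle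
    push_neg at hle
    have hglb := hG r hrA
    have hSgt : ∀ y, r ≤ (μ (Set.Iic y)).toReal → a < y := by
      intro y hy
      by_contra h
      push_neg at h
      exact absurd (hy.trans (hmono (Set.Iic_subset_Iic.2 h))) (not_le.2 hra)
    have halb : a ∈ lowerBounds {y : X | r ≤ (μ (Set.Iic y)).toReal} :=
      fun y hy => (hSgt y hy).le
    have hga : G r = a := le_antisymm hle (hglb.2 halb)
    have hacc : ∀ c, a < c → ∃ s, r ≤ (μ (Set.Iic s)).toReal ∧ s < c := by
      intro c hc
      by_contra h
      push_neg at h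
      have hclb : c ∈ lowerBounds {y : X | r ≤ (μ (Set.Iic y)).toReal} :=
        fun y hy => h y hy
      have := hglb.2 hclb
      rw [hga] at this
      exact absurd hc (not_lt.2 this)
    set E : Set X := insert b {d ∈ D | ∃ s, r ≤ (μ (Set.Iic s)).toReal ∧ s ≤ d} with hE
    have hEc : E.Countable := (hDc.mono (Set.sep_subset _ _)).insert b
    have : Countable E := hEc.to_subtype
    have hiE : ∀ d ∈ E, ENNReal.ofReal r ≤ μ (Set.Iic d) := by
      intro d hd
      rcases hd with rfl | ⟨-, s, hs, hsd⟩
      · exact ENNReal.ofReal_le_of_le_toReal hrb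
      · exact le_trans (ENNReal.ofReal_le_of_le_toReal hs)
          (measure_mono (Set.Iic_subset_Iic.2 hsd))
    have hcap : (⋂ d : E, Set.Iic (d : X)) = Set.Iic a := by
      ext x
      simp only [Set.mem_iInter, Set.mem_Iic]
      constructor
      · intro hx
        by_contra hxa
        push_neg at hxa
        obtain ⟨s, hs, hsx⟩ := hacc x hxa
        have hsa : a < s := hSgt s hs
        obtain ⟨d, hdD, hd⟩ := hDd.exists_mem_open isOpen_Ioo ⟨s, hsa, hsx⟩
        obtain ⟨s', hs', hs'd⟩ := hacc d hd.1
        have hdE : d ∈ E := Set.mem_insert_iff.2 (Or.inr ⟨hdD, s', hs', hs'd.le⟩)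
        exact absurd (hx ⟨d, hdE⟩) (not_le.2 hd.2)
      · intro hx d
        rcases d.2 with h | h
        · rw [h]; exact hx.trans hab.le
        · obtain ⟨-, s, hs, hsd⟩ := h
          exact hx.trans ((hSgt s hs).le.trans hsd)
    have hdir : Directed (· ⊇ ·) (fun d : E => Set.Iic (d : X)) := by
      intro i j
      rcases le_total (i : X) (j : X) with h | h
      · exact ⟨i, subset_rfl, Set.Iic_subset_Iic.2 h⟩
      · exact ⟨j, Set.Iic_subset_Iic.2 h, subset_rfl⟩
    have hmeas := Directed.measure_iInter (μ := μ)
      (fun d : E => measurableSet_Iic.nullMeasurableSet) hdir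
      ⟨⟨b, Set.mem_insert _ _⟩, measure_ne_top μ _⟩
    rw [hcap] at hmeas
    have hfin : ENNReal.ofReal r ≤ μ (Set.Iic a) := by
      rw [hmeas]; exact le_iInf fun d => hiE d d.2
    have h4 := ENNReal.toReal_mono (measure_ne_top μ _) hfin
    rw [ENNReal.toReal_ofReal (hA0 r hrA)] at h4
    exact absurd hra (not_lt.2 h4)
  constructor
  · rintro r ⟨⟨hr1, hr2⟩, hrA⟩
    refine ⟨?_, hrA⟩
    have hrb : r ≤ (μ (Set.Iic b)).toReal :=
      hr2.le.trans (hmono Set.Iio_subset_Iic_self)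
    refine ⟨key1 r hrA hr1 hrb, ?_⟩
    obtain ⟨y, hyb, hy⟩ := key2 r (hA0 r hrA) hr2
    exact lt_of_le_of_lt ((hG r hrA).1 hy) hyb
  · rintro r ⟨hrG, hrA⟩
    obtain ⟨haG, hGb⟩ := hrG
    refine ⟨⟨?_, ?_⟩, hrA⟩
    · by_contra h
      push_neg at h
      have ha : a ∈ {y : X | r ≤ (μ (Set.Iic y)).toReal} := h
      exact absurd ((hG r hrA).1 ha) (not_le.2 haG)
    · by_contra h
      push_neg at h
      have hlb : b ∈ lowerBounds {y : X | r ≤ (μ (Set.Iic y)).toReal} := by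
        intro y hy
        by_contra hby
        push_neg at hby
        exact absurd (hy.trans (hmono (Set.Iic_subset_Iio.2 hby)))
          (not_le.2 h)
      exact absurd ((hG r hrA).2 hlb) (not_le.2 hGb)
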